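/- arXiv:1802.07903 — 2 statements merged into one kernel-verified Lean document; each statement's English description precedes it below -/
import Mathlib

section
/- For λ ∈ [0,1] and real random variables X, Y on a finite probability space, CVaR_α(λ X + (1−λ) Y) ≤ λ CVaR_α(X) + (1−λ) CVaR_α(Y), where CVaR_α(X) := inf_{z ∈ ℝ} E[z + (X − z)⁺/(1−α)], α ∈ (0,1). -/
/-- Convexity of CVaR: for `λ ∈ [0,1]`,
`CVaR_α(λX + (1−λ)Y) ≤ λ CVaR_α(X) + (1−λ) CVaR_α(Y)`. -/
theorem stmt_7 (Ω : Type*) [Fintype Ω] (p : Ω → ℝ)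
    (hp : ∀ ω, 0 ≤ p ω) (hsum : ∑ ω, p ω = 1)
    (X Y : Ω → ℝ) (α : ℝ) (hα : α ∈ Set.Ioo (0 : ℝ) 1)
    (lam : ℝ) (hlam : lam ∈ Set.Icc (0 : ℝ) 1) :
    (⨅ z : ℝ, ∑ ω, p ω * (z + max (lam * X ω + (1 - lam) * Y ω - z) 0 / (1 - α))) ≤
      lam * (⨅ z : ℝ, ∑ ω, p ω * (z + max (X ω - z) 0 / (1 - α))) +
        (1 - lam) * (⨅ z : ℝ, ∑ ω, p ω * (z + max (Y ω - z) 0 / (1 - α))) := by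
  obtain ⟨hα0, hα1⟩ := hα
  obtain ⟨hl0, hl1⟩ := hlam
  have hl1' : (0:ℝ) ≤ 1 - lam := by linarith
  have hβ : 0 < 1 - α := by linarith
  have key : BddBelow (Set.range fun z : ℝ =>
      ∑ ω, p ω * (z + max (lam * X ω + (1 - lam) * Y ω - z) 0 / (1 - α))) := by
    refine ⟨∑ ω, p ω * (lam * X ω + (1 - lam) * Y ω), ?_⟩
    rintro x ⟨z, rfl⟩
    apply Finset.sum_le_sum
    intro ω _
    apply mul_le_mul_of_nonneg_left _ (hp ω)
    set Zω := lam * X ω + (1 - lam) * Y ω with hZ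
    rcases le_or_gt Zω z with h | h
    · have : 0 ≤ max (Zω - z) 0 / (1 - α) := div_nonneg (le_max_right _ _) hβ.le
      linarith
    · have hm : max (Zω - z) 0 = Zω - z := max_eq_left (by linarith)
      rw [hm]
      have : Zω - z ≤ (Zω - z) / (1 - α) := by
        rw [le_div_iff₀ hβ]; nlinarith
      linarith
  rw [Real.mul_iInf_of_nonneg hl0, Real.mul_iInf_of_nonneg hl1']
  refine le_ciInf_add_ciInf ?_
  intro z₁ z₂
  have h1 := ciInf_le key (lam * z₁ + (1 - lam) * z₂)
  refine h1.trans ?_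
  simp only [Finset.mul_sum, ← Finset.sum_add_distrib]
  apply Finset.sum_le_sum
  intro ω _
  have hrw : lam * (p ω * (z₁ + max (X ω - z₁) 0 / (1 - α))) +
      (1 - lam) * (p ω * (z₂ + max (Y ω - z₂) 0 / (1 - α))) =
      p ω * (lam * (z₁ + max (X ω - z₁) 0 / (1 - α)) +
        (1 - lam) * (z₂ + max (Y ω - z₂) 0 / (1 - α))) := by ring
  rw [hrw]
  apply mul_le_mul_of_nonneg_left _ (hp ω)
  have m1 := le_max_left (X ω - z₁) 0
  have m1' := le_max_right (X ω - z₁) 0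
  have m2 := le_max_left (Y ω - z₂) 0
  have m2' := le_max_right (Y ω - z₂) 0
  have hmax : max (lam * X ω + (1 - lam) * Y ω - (lam * z₁ + (1 - lam) * z₂)) 0 ≤
      lam * max (X ω - z₁) 0 + (1 - lam) * max (Y ω - z₂) 0 := by
    apply max_le
    · nlinarith
    · nlinarith
  have hdiv : max (lam * X ω + (1 - lam) * Y ω - (lam * z₁ + (1 - lam) * z₂)) 0 / (1 - α) ≤
      lam * (max (X ω - z₁) 0 / (1 - α)) + (1 - lam) * (max (Y ω - z₂) 0 / (1 - α)) := by
    have hre : lam * (max (X ω - z₁) 0 / (1 - α)) + (1 - lam) * (max (Y ω - z₂) 0 / (1 - α)) =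
        (lam * max (X ω - z₁) 0 + (1 - lam) * max (Y ω - z₂) 0) / (1 - α) := by ring
    rw [hre]
    gcongr
  linarith
end

section
/- For a bounded real random variable X on a finite probability space with values in [m, M] and α ∈ (0,1), the infimum in CVaR_α(X) = inf_{z ∈ ℝ} E[z + (X − z)⁺/(1−α)] is attained at some z ∈ [m, M]. -/
/-- For `m ≤ X ≤ M` on a finite probability space, the infimum defining CVaR
is attained at some `z ∈ [m, M]`. -/
theorem stmt_10 (Ω : Type*) [Fintype Ω] (p : Ω → ℝ)
    (hp : ∀ ω, 0 ≤ p ω) (hsum : ∑ ω, p ω = 1)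
    (X : Ω → ℝ) (m M : ℝ) (hm : ∀ ω, m ≤ X ω) (hM : ∀ ω, X ω ≤ M)
    (α : ℝ) (hα : α ∈ Set.Ioo (0 : ℝ) 1) :
    ∃ z₀ ∈ Set.Icc m M,
      (∑ ω, p ω * (z₀ + max (X ω - z₀) 0 / (1 - α))) =
        ⨅ z : ℝ, ∑ ω, p ω * (z + max (X ω - z) 0 / (1 - α)) := by
  obtain ⟨hα0, hα1⟩ := hα
  have h1α : (0:ℝ) < 1 - α := by linarith
  set f : ℝ → ℝ := fun z => ∑ ω, p ω * (z + max (X ω - z) 0 / (1 - α)) with hf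
  have hΩ : Nonempty Ω := by
    by_contra h
    rw [not_nonempty_iff] at h
    rw [Finset.univ_eq_empty, Finset.sum_empty] at hsum
    norm_num at hsum
  have hmM : m ≤ M := le_trans (hm (Classical.arbitrary Ω)) (hM (Classical.arbitrary Ω))
  have hcont : Continuous f := by
    apply continuous_finset_sum
    intro ω _
    exact continuous_const.mul (continuous_id.add
      (((continuous_const.sub continuous_id).max continuous_const).div_const _))
  obtain ⟨z₀, hz₀, hmin⟩ := (isCompact_Icc : IsCompact (Set.Icc m M)).exists_isMinOn
    ⟨m, Set.left_mem_Icc.mpr hmM⟩ hcont.continuousOn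
  have key : ∀ z, f z₀ ≤ f z := by
    intro z
    rcases le_total z m with h | h
    · refine le_trans (hmin (Set.left_mem_Icc.mpr hmM)) ?_
      apply Finset.sum_le_sum
      intro ω _
      have hmax1 : max (X ω - m) 0 = X ω - m := max_eq_left (by linarith [hm ω])
      have hmax2 : max (X ω - z) 0 = X ω - z := max_eq_left (by linarith [hm ω])
      rw [hmax1, hmax2]
      apply mul_le_mul_of_nonneg_left _ (hp ω)
      have hdiff : z + (X ω - z) / (1 - α) - (m + (X ω - m) / (1 - α))
          = (m - z) * α / (1 - α) := by field_simp; ring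
      have hnn : 0 ≤ (m - z) * α / (1 - α) :=
        div_nonneg (mul_nonneg (by linarith) hα0.le) h1α.le
      linarith
    · rcases le_total z M with h2 | h2
      · exact hmin ⟨h, h2⟩
      · refine le_trans (hmin (Set.right_mem_Icc.mpr hmM)) ?_
        apply Finset.sum_le_sum
        intro ω _
        have hmax1 : max (X ω - M) 0 = 0 := max_eq_right (by linarith [hM ω])
        rw [hmax1]
        apply mul_le_mul_of_nonneg_left _ (hp ω)
        have hnn : 0 ≤ max (X ω - z) 0 / (1 - α) :=
          div_nonneg (le_max_right _ _) h1α.le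
        simp only [zero_div, add_zero]
        linarith
  refine ⟨z₀, hz₀, ?_⟩
  show f z₀ = ⨅ z, f z
  exact le_antisymm (le_ciInf key)
    (ciInf_le ⟨f z₀, fun y ⟨z, hz⟩ => hz ▸ key z⟩ z₀)
end
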